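/- Fix a real N > 0 and a natural number l. For every real x > 0 and every real y with |y|·x < N, the series Σ_{ν=0}^{∞} (yᵛ/ν!)·𝒫_ν^N(x,l) converges, with sum equal to the closed-form generating function [1 + y(1+x/N)]^l · (1 + xy/N)^{−N}, where [1+y(1+x/N)]^l is a natural-number power and (1+xy/N)^{−N} is a real power of the positive real 1+xy/N. -/

import Mathlib

open Complex in
noncomputable def cplF (N : ℝ) (l : ℕ) (z : ℂ) : ℂ := z ^ l * (1 + z / N) ^ (-N : ℂ)

lemma cplF_diffOn (N : ℝ) (hN : 0 < N) (l : ℕ) :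
    DifferentiableOn ℂ (cplF N l) {z : ℂ | 1 + z / N ∈ Complex.slitPlane} := by
  intro z hz
  refine DifferentiableAt.differentiableWithinAt ?_
  refine (differentiableAt_pow l).mul ?_
  exact ((differentiableAt_const _).add (differentiableAt_id.div_const _)).cpow
    (differentiableAt_const _) hz

lemma cplF_ofReal (N : ℝ) (hN : 0 < N) (l : ℕ) {t : ℝ} (ht : 0 < 1 + t / N) :
    cplF N l t = ((t ^ l * (1 + t / N) ^ (-N) : ℝ) : ℂ) := by
  rw [cplF]
  push_cast [Complex.ofReal_cpow ht.le]
  norm_num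

lemma cplF_slit_open (N : ℝ) : IsOpen {z : ℂ | 1 + z / N ∈ Complex.slitPlane} :=
  Complex.isOpen_slitPlane.preimage (by fun_prop)

lemma cplF_analytic (N : ℝ) (hN : 0 < N) (l : ℕ) (n : ℕ) :
    AnalyticOnNhd ℂ (iteratedDeriv n (cplF N l)) {z : ℂ | 1 + z / N ∈ Complex.slitPlane} := by
  induction n with
  | zero =>
      simpa using (cplF_diffOn N hN l).analyticOnNhd (cplF_slit_open N)
  | succ n ih =>
      rw [iteratedDeriv_succ]
      exact ih.deriv

lemma cplF_mem_slit (N : ℝ) (hN : 0 < N) {t : ℝ} (ht : -N < t) :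
    (t : ℂ) ∈ {z : ℂ | 1 + z / N ∈ Complex.slitPlane} := by
  simp only [Set.mem_setOf_eq, Complex.mem_slitPlane_iff]
  left
  have : (1 : ℂ) + (t : ℂ) / (N : ℂ) = ((1 + t / N : ℝ) : ℂ) := by push_cast; ring
  rw [this, Complex.ofReal_re]
  have : 0 < 1 + t / N := by
    rw [← div_self hN.ne', ← add_div, div_pos_iff]; left; constructor <;> linarith
  linarith

lemma cplF_iteratedDeriv (N : ℝ) (hN : 0 < N) (l : ℕ) (n : ℕ) {t : ℝ} (ht : -N < t) :
    iteratedDeriv n (cplF N l) t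
      = ((iteratedDeriv n (fun t : ℝ => t ^ l * (1 + t / N) ^ (-N)) t : ℝ) : ℂ) := by
  induction n generalizing t with
  | zero =>
      simp only [iteratedDeriv_zero]
      refine cplF_ofReal N hN l ?_
      rw [← div_self hN.ne', ← add_div, div_pos_iff]; left; constructor <;> linarith
  | succ n ih =>
      set G := iteratedDeriv n (cplF N l)
      set g := iteratedDeriv n (fun t : ℝ => t ^ l * (1 + t / N) ^ (-N))
      have hGd : HasDerivAt G (deriv G t) t :=
        ((cplF_analytic N hN l n (t : ℂ) (cplF_mem_slit N hN ht)).differentiableAt).hasDerivAt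
      have h1 : HasDerivAt (fun s : ℝ => G s) (deriv G t) t := hGd.comp_ofReal
      have heq : (fun s : ℝ => G s) =ᶠ[nhds t] (fun s : ℝ => ((g s : ℝ) : ℂ)) := by
        filter_upwards [eventually_gt_nhds ht] with s hs
        exact ih hs
      have h3 : HasDerivAt (fun s : ℝ => ((g s : ℝ) : ℂ)) (deriv G t) t :=
        h1.congr_of_eventuallyEq heq.symm
      have h6 : HasDerivAt (fun s : ℝ => (G s).re) (deriv G t).re t := hGd.real_of_complex
      have h4 : HasDerivAt g (deriv G t).re t := by
        refine h6.congr_of_eventuallyEq ?_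
        filter_upwards [eventually_gt_nhds ht] with s hs
        rw [ih hs, Complex.ofReal_re]
      have h5 : HasDerivAt (fun s : ℝ => ((g s : ℝ) : ℂ)) ((deriv G t).re : ℂ) t :=
        h4.ofReal_comp
      have hreal : (deriv G (t : ℂ) : ℂ) = ((deriv G t).re : ℂ) := h3.unique h5
      rw [iteratedDeriv_succ, iteratedDeriv_succ, hreal, h4.deriv]


/-- Complementary pre-Laguerre polynomial:
`𝒫_ν^N(x,l) = x^(ν-l) (1+x/N)^(N+ν) (dᵛ/dtᵛ)(t^l (1+t/N)^(-N)) |_{t=x}`,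
with `x^(ν-l)` a zpow power, `t^l` a natural power, and rpow powers of `1+t/N`. -/
noncomputable def complPreLaguerre (N : ℝ) (l ν : ℕ) (x : ℝ) : ℝ :=
  x ^ ((ν : ℤ) - (l : ℤ)) * (1 + x / N) ^ (N + (ν : ℝ)) *
    iteratedDeriv ν (fun t : ℝ => t ^ l * (1 + t / N) ^ (-N)) x

theorem complPreLaguerre_genFun (N : ℝ) (hN : 0 < N) (l : ℕ) (x y : ℝ) (hx : 0 < x)
    (hy : |y| * x < N) :
    HasSum (fun ν : ℕ => y ^ ν / (Nat.factorial ν : ℝ) * complPreLaguerre N l ν x)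
      ((1 + y * (1 + x / N)) ^ l * (1 + x * y / N) ^ (-N)) := by
  have hx1 : 0 < 1 + x / N := by positivity
  set z₀ : ℝ := x * y * (1 + x / N) with hz₀def
  have hxyN : 0 < 1 + x * y / N := by
    have h1 : -(|y| * x) ≤ x * y := by
      have h := neg_abs_le (x * y)
      rw [abs_mul, abs_of_pos hx] at h
      linarith
    have h2 : -N < x * y := by linarith
    have : -1 < x * y / N := by
      rw [lt_div_iff₀ hN]; linarith
    linarith
  have hz₀abs : |z₀| < x + N := by
    have h1 : |z₀| = |y| * x * (1 + x / N) := by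
      rw [hz₀def, abs_mul, abs_mul, abs_of_pos hx, abs_of_pos hx1]; ring
    have h2 : |y| * x * (1 + x / N) < N * (1 + x / N) :=
      mul_lt_mul_of_pos_right hy hx1
    have h3 : N * (1 + x / N) = N + x := by field_simp
    rw [h1]; linarith
  -- the complex ball is inside the slit region
  have hball : Metric.ball (x : ℂ) (x + N) ⊆ {z : ℂ | 1 + z / N ∈ Complex.slitPlane} := by
    intro z hz
    rw [Metric.mem_ball, Complex.dist_eq] at hz
    simp only [Set.mem_setOf_eq, Complex.mem_slitPlane_iff]
    rcases eq_or_ne z.im 0 with him | him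
    · left
      have hre : |z.re - x| ≤ ‖z - (x : ℂ)‖ := by
        simpa using Complex.abs_re_le_norm (z - (x : ℂ))
      have : -(x + N) < z.re - x := by
        have h1 := neg_abs_le (z.re - x)
        linarith [hre.trans_lt hz]
      have hzre : -N < z.re := by linarith
      have : (1 + z / N).re = 1 + z.re / N := by
        simp [Complex.add_re, Complex.div_re, Complex.normSq_ofReal]
        field_simp
      rw [this]
      have : -1 < z.re / N := by rw [neg_lt, ← neg_div, div_lt_one hN]; linarith
      linarith
    · right
      have : (1 + z / N).im = z.im / N := by
        simp [Complex.add_im, Complex.div_im, Complex.normSq_ofReal]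
        field_simp
      rw [this]
      exact div_ne_zero him hN.ne'
  have hmem : ((x + z₀ : ℝ) : ℂ) ∈ Metric.ball (x : ℂ) (x + N) := by
    rw [Metric.mem_ball, Complex.dist_eq]
    have hsub : ((x + z₀ : ℝ) : ℂ) - (x : ℂ) = ((z₀ : ℝ) : ℂ) := by push_cast; ring
    rw [hsub, Complex.norm_real, Real.norm_eq_abs]
    exact hz₀abs
  have hTaylor := Complex.hasSum_taylorSeries_on_ball
    ((cplF_diffOn N hN l).mono hball) hmem
  have hxN : -N < x := by linarith
  have hpos' : 0 < 1 + (x + z₀) / N := by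
    have e2 : 1 + (x + z₀) / N = (1 + x / N) * (1 + x * y / N) := by
      rw [hz₀def]; field_simp; ring
    rw [e2]; positivity
  have hT2 : HasSum
      (fun n : ℕ => (((Nat.factorial n : ℝ)⁻¹ * z₀ ^ n *
        iteratedDeriv n (fun t : ℝ => t ^ l * (1 + t / N) ^ (-N)) x : ℝ) : ℂ))
      (((x + z₀) ^ l * (1 + (x + z₀) / N) ^ (-N) : ℝ) : ℂ) := by
    convert hTaylor using 1
    · rfl
    · funext n
      rw [cplF_iteratedDeriv N hN l n hxN]
      have hsub : ((x + z₀ : ℝ) : ℂ) - (x : ℂ) = (z₀ : ℂ) := by push_cast; ring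
      rw [hsub]
      push_cast
      simp only [smul_eq_mul]
      ring
    · exact (cplF_ofReal N hN l hpos').symm
  have hsum : HasSum
      (fun n : ℕ => (Nat.factorial n : ℝ)⁻¹ * z₀ ^ n *
        iteratedDeriv n (fun t : ℝ => t ^ l * (1 + t / N) ^ (-N)) x)
      ((x + z₀) ^ l * (1 + (x + z₀) / N) ^ (-N)) := Complex.hasSum_ofReal.mp hT2
  have hfinal := hsum.mul_left (x ^ (-(l : ℤ)) * (1 + x / N) ^ (N : ℝ))
  convert hfinal using 1
  · rfl
  · funext n
    show y ^ n / (Nat.factorial n : ℝ) * complPreLaguerre N l n x = _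
    rw [complPreLaguerre, zpow_sub₀ hx.ne', zpow_natCast, zpow_natCast,
      Real.rpow_add hx1, Real.rpow_natCast, zpow_neg, zpow_natCast, hz₀def, mul_pow, mul_pow,
      div_eq_mul_inv, div_eq_mul_inv]
    ring
  · have e1 : x + z₀ = x * (1 + y * (1 + x / N)) := by rw [hz₀def]; ring
    have e2 : 1 + (x + z₀) / N = (1 + x / N) * (1 + x * y / N) := by
      rw [hz₀def]; field_simp; ring
    rw [e2, e1, mul_pow, Real.mul_rpow hx1.le hxyN.le]
    have hxl : x ^ (-(l : ℤ)) * x ^ l = 1 := by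
      rw [zpow_neg, zpow_natCast]
      exact inv_mul_cancel₀ (pow_ne_zero _ hx.ne')
    have hNN : (1 + x / N) ^ (N : ℝ) * (1 + x / N) ^ (-N) = 1 := by
      rw [← Real.rpow_add hx1]
      norm_num
    calc (1 + y * (1 + x / N)) ^ l * (1 + x * y / N) ^ (-N)
        = (x ^ (-(l : ℤ)) * x ^ l) * ((1 + x / N) ^ (N : ℝ) * (1 + x / N) ^ (-N)) *
          ((1 + y * (1 + x / N)) ^ l * (1 + x * y / N) ^ (-N)) := by rw [hxl, hNN]; ring
      _ = x ^ (-(l : ℤ)) * (1 + x / N) ^ (N : ℝ) *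
          (x ^ l * (1 + y * (1 + x / N)) ^ l * ((1 + x / N) ^ (-N) * (1 + x * y / N) ^ (-N))) := by
          ring
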